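/- Let M be a norm on ℝⁿ with differentiable dual M⁰ away from 0. Suppose M and M⁰ satisfy M(∇M⁰(x)) = 1 for x ≠ 0, and M is strictly convex with M² ∈ C². Then for every x ≠ 0, M⁰(x) · ∇M(∇M⁰(x)) = x. -/

import Mathlib

open Real RealInnerProductSpace

private lemma aux_upper (n : ℕ) (M : EuclideanSpace ℝ (Fin n) → ℝ)
    (hM0 : ∀ x, 0 ≤ M x) (hM1 : ∀ x, M x = 0 ↔ x = 0)
    (hM2 : ∀ (c : ℝ) x, M (c • x) = |c| * M x)
    (hM3 : ∀ x y, M (x + y) ≤ M x + M y) :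
    ∃ K : ℝ, 0 ≤ K ∧ ∀ y : EuclideanSpace ℝ (Fin n), M y ≤ K * ‖y‖ := by
  classical
  refine ⟨∑ i, M (EuclideanSpace.single i 1), Finset.sum_nonneg fun i _ => hM0 _, fun y => ?_⟩
  have hsum : ∀ (s : Finset (Fin n)) (f : Fin n → EuclideanSpace ℝ (Fin n)),
      M (∑ i ∈ s, f i) ≤ ∑ i ∈ s, M (f i) := by
    intro s f
    induction s using Finset.induction with
    | empty => simp [(hM1 0).mpr rfl]
    | insert _ _ hi ih =>
        rw [Finset.sum_insert hi, Finset.sum_insert hi]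
        exact (hM3 _ _).trans (by linarith)
  have hdecomp : y = ∑ i, y i • EuclideanSpace.single i 1 := by
    have := (EuclideanSpace.basisFun (Fin n) ℝ).sum_repr y
    simp only [EuclideanSpace.basisFun_apply, EuclideanSpace.basisFun_repr] at this
    exact this.symm
  have habs : ∀ i, |y i| ≤ ‖y‖ := by
    intro i
    have h1 : ⟪EuclideanSpace.single i (1:ℝ), y⟫ = y i := by
      simp [EuclideanSpace.inner_single_left]
    calc |y i| = |⟪EuclideanSpace.single i (1:ℝ), y⟫| := by rw [h1]
      _ ≤ ‖EuclideanSpace.single i (1:ℝ)‖ * ‖y‖ := abs_real_inner_le_norm _ _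
      _ = ‖y‖ := by rw [EuclideanSpace.norm_single]; simp
  calc M y = M (∑ i, y i • EuclideanSpace.single i 1) := by rw [← hdecomp]
    _ ≤ ∑ i, M (y i • EuclideanSpace.single i 1) := hsum _ _
    _ = ∑ i, |y i| * M (EuclideanSpace.single i 1) := by simp [hM2]
    _ ≤ ∑ i, ‖y‖ * M (EuclideanSpace.single i 1) :=
        Finset.sum_le_sum fun i _ => mul_le_mul_of_nonneg_right (habs i) (hM0 _)
    _ = (∑ i, M (EuclideanSpace.single i 1)) * ‖y‖ := by rw [← Finset.mul_sum, mul_comm]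

private lemma aux_cont (n : ℕ) (M : EuclideanSpace ℝ (Fin n) → ℝ)
    (hM2 : ∀ (c : ℝ) x, M (c • x) = |c| * M x)
    (hM3 : ∀ x y, M (x + y) ≤ M x + M y)
    (K : ℝ) (hK : 0 ≤ K) (hKb : ∀ y, M y ≤ K * ‖y‖) : Continuous M := by
  have hlip : ∀ a b : EuclideanSpace ℝ (Fin n), |M a - M b| ≤ K * ‖a - b‖ := by
    intro a b
    have h1 : M a ≤ M (a - b) + M b := by
      have := hM3 (a - b) b; simpa using this
    have h2 : M b ≤ M (a - b) + M a := by
      have h3 := hM3 (b - a) a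
      have h4 : M (b - a) = M (a - b) := by
        have : (b - a) = (-1 : ℝ) • (a - b) := by module
        rw [this, hM2]; norm_num
      simp only [sub_add_cancel] at h3
      linarith [h3, h4.symm.le]
    have := hKb (a - b)
    rw [abs_sub_le_iff]; constructor <;> linarith
  rw [Metric.continuous_iff]
  intro b ε hε
  rcases eq_or_lt_of_le hK with h | h
  · exact ⟨1, one_pos, fun a _ => by
      have := hlip a b
      rw [← h] at this
      simp only [zero_mul] at this
      have : |M a - M b| ≤ 0 := this
      simpa [Real.dist_eq] using lt_of_le_of_lt this hε⟩
  · refine ⟨ε / K, by positivity, fun a ha => ?_⟩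
    have := hlip a b
    rw [Real.dist_eq]
    calc |M a - M b| ≤ K * ‖a - b‖ := this
      _ < K * (ε / K) := by
          apply mul_lt_mul_of_pos_left _ h
          rwa [← dist_eq_norm]
      _ = ε := by field_simp

private lemma aux_lower (n : ℕ) (hn : 0 < n) (M : EuclideanSpace ℝ (Fin n) → ℝ)
    (hM0 : ∀ x, 0 ≤ M x) (hM1 : ∀ x, M x = 0 ↔ x = 0)
    (hM2 : ∀ (c : ℝ) x, M (c • x) = |c| * M x)
    (hcont : Continuous M) :
    ∃ m : ℝ, 0 < m ∧ ∀ y : EuclideanSpace ℝ (Fin n), m * ‖y‖ ≤ M y := by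
  have : Nonempty (Fin n) := ⟨⟨0, hn⟩⟩
  have hsne : (Metric.sphere (0 : EuclideanSpace ℝ (Fin n)) 1).Nonempty :=
    NormedSpace.sphere_nonempty.mpr zero_le_one
  obtain ⟨z, hz, hzmin⟩ := (isCompact_sphere (0 : EuclideanSpace ℝ (Fin n)) 1).exists_isMinOn
    hsne hcont.continuousOn
  have hz0 : z ≠ 0 := by
    intro h
    rw [h] at hz
    simp at hz
  refine ⟨M z, lt_of_le_of_ne (hM0 z) (fun h => hz0 ((hM1 z).mp h.symm)), fun y => ?_⟩
  rcases eq_or_ne y 0 with rfl | hy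
  · simp [(hM1 0).mpr rfl]
  · have hny : (0:ℝ) < ‖y‖ := norm_pos_iff.mpr hy
    have hmem : (‖y‖⁻¹ • y) ∈ Metric.sphere (0 : EuclideanSpace ℝ (Fin n)) 1 := by
      simp [norm_smul, abs_of_pos (inv_pos.mpr hny), inv_mul_cancel₀ hny.ne']
    have h1 : M z ≤ M (‖y‖⁻¹ • y) := hzmin hmem
    have h2 : M (‖y‖⁻¹ • y) = ‖y‖⁻¹ * M y := by
      rw [hM2]; rw [abs_of_pos (inv_pos.mpr hny)]
    rw [h2] at h1
    have h3 : M z * ‖y‖ ≤ (‖y‖⁻¹ * M y) * ‖y‖ := mul_le_mul_of_nonneg_right h1 hny.le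
    calc M z * ‖y‖ ≤ (‖y‖⁻¹ * M y) * ‖y‖ := h3
      _ = M y := by field_simp

theorem stmt9 (n : ℕ) (hn : 0 < n) (M : EuclideanSpace ℝ (Fin n) → ℝ)
    (hM0 : ∀ x, 0 ≤ M x)
    (hM1 : ∀ x, M x = 0 ↔ x = 0)
    (hM2 : ∀ (c : ℝ) x, M (c • x) = |c| * M x)
    (hM3 : ∀ x y, M (x + y) ≤ M x + M y)
    (M₀ : EuclideanSpace ℝ (Fin n) → ℝ)
    (hdual : ∀ x, M₀ x = sSup ((fun ξ => ⟪x, ξ⟫) '' {ξ | M ξ = 1}))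
    (hM₀diff : ∀ x : EuclideanSpace ℝ (Fin n), x ≠ 0 → DifferentiableAt ℝ M₀ x)
    (hone : ∀ x : EuclideanSpace ℝ (Fin n), x ≠ 0 → M (gradient M₀ x) = 1)
    (hstrict : StrictConvexOn ℝ Set.univ (fun x => (M x) ^ 2))
    (hMC2 : ContDiffOn ℝ 2 (fun x => (M x) ^ 2) {(0 : EuclideanSpace ℝ (Fin n))}ᶜ)
    (x : EuclideanSpace ℝ (Fin n)) (hx : x ≠ 0) :
    M₀ x • gradient M (gradient M₀ x) = x := by
  classical
  obtain ⟨K, hK, hKb⟩ := aux_upper n M hM0 hM1 hM2 hM3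
  have hcont := aux_cont n M hM2 hM3 K hK hKb
  obtain ⟨m, hm, hmb⟩ := aux_lower n hn M hM0 hM1 hM2 hcont
  set S : Set (EuclideanSpace ℝ (Fin n)) := {ξ | M ξ = 1} with hS
  -- S nonempty
  have hMx : 0 < M x := lt_of_le_of_ne (hM0 x) (fun h => hx ((hM1 x).mp h.symm))
  have hmemS : ∀ y : EuclideanSpace ℝ (Fin n), y ≠ 0 → (M y)⁻¹ • y ∈ S := by
    intro y hy
    have hMy : 0 < M y := lt_of_le_of_ne (hM0 y) (fun h => hy ((hM1 y).mp h.symm))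
    show M ((M y)⁻¹ • y) = 1
    rw [hM2, abs_of_pos (inv_pos.mpr hMy), inv_mul_cancel₀ hMy.ne']
  have hSne : S.Nonempty := ⟨(M x)⁻¹ • x, hmemS x hx⟩
  -- boundedness of the image sets
  have hbdd : ∀ z : EuclideanSpace ℝ (Fin n), BddAbove ((fun ξ => ⟪z, ξ⟫) '' S) := by
    intro z
    refine ⟨‖z‖ * m⁻¹, fun r hr => ?_⟩
    obtain ⟨η, hη, rfl⟩ := hr
    have h1 : m * ‖η‖ ≤ 1 := by rw [← hη]; exact hmb η
    have h2 : ‖η‖ ≤ m⁻¹ := by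
      rw [← one_div, le_div_iff₀ hm, mul_comm]
      exact h1
    calc ⟪z, η⟫ ≤ ‖z‖ * ‖η‖ := real_inner_le_norm z η
      _ ≤ ‖z‖ * m⁻¹ := mul_le_mul_of_nonneg_left h2 (norm_nonneg z)
  -- key inequality
  have key_le : ∀ (z η : EuclideanSpace ℝ (Fin n)), ⟪z, η⟫ ≤ M₀ z * M η := by
    intro z η
    rcases eq_or_ne η 0 with rfl | hη
    · simp [(hM1 0).mpr rfl]
    · have hMη : 0 < M η := lt_of_le_of_ne (hM0 η) (fun h => hη ((hM1 η).mp h.symm))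
      have h1 : ⟪z, (M η)⁻¹ • η⟫ ≤ M₀ z := by
        rw [hdual z]
        exact le_csSup (hbdd z) ⟨(M η)⁻¹ • η, hmemS η hη, rfl⟩
      rw [real_inner_smul_right] at h1
      have := mul_le_mul_of_nonneg_right h1 hMη.le
      calc ⟪z, η⟫ = (M η)⁻¹ * ⟪z, η⟫ * M η := by field_simp
        _ ≤ M₀ z * M η := this
  -- positivity of M₀ x
  have hM₀pos : 0 < M₀ x := by
    have h1 : ⟪x, (M x)⁻¹ • x⟫ ≤ M₀ x := by
      rw [hdual x]
      exact le_csSup (hbdd x) ⟨(M x)⁻¹ • x, hmemS x hx, rfl⟩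
    have h2 : ⟪x, (M x)⁻¹ • x⟫ = (M x)⁻¹ * ‖x‖ ^ 2 := by
      rw [real_inner_smul_right, real_inner_self_eq_norm_sq]
    have hnx : (0:ℝ) < ‖x‖ := norm_pos_iff.mpr hx
    have h4 : (0:ℝ) < (M x)⁻¹ * ‖x‖ ^ 2 := mul_pos (inv_pos.mpr hMx) (pow_pos hnx 2)
    rw [h2] at h1
    linarith
  -- homogeneity of M₀ along positive scalars
  have hom : ∀ t : ℝ, 0 < t → M₀ (t • x) = t * M₀ x := by
    intro t ht
    rw [hdual (t • x), hdual x]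
    have himg : ∀ η ∈ S, ⟪t • x, η⟫ = t * ⟪x, η⟫ := fun η _ => real_inner_smul_left x η t
    apply le_antisymm
    · apply csSup_le (hSne.image _)
      rintro r ⟨η, hη, rfl⟩
      beta_reduce
      rw [himg η hη]
      exact mul_le_mul_of_nonneg_left (le_csSup (hbdd x) ⟨η, hη, rfl⟩) ht.le
    · rw [← le_div_iff₀' ht]
      apply csSup_le (hSne.image _)
      rintro r ⟨η, hη, rfl⟩
      beta_reduce
      rw [le_div_iff₀' ht]
      have : t * ⟪x, η⟫ = ⟪t • x, η⟫ := (himg η hη).symm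
      rw [this]
      exact le_csSup (hbdd (t • x)) ⟨η, hη, rfl⟩
  -- Euler's identity
  set ξ : EuclideanSpace ℝ (Fin n) := gradient M₀ x with hξdef
  have hMξ : M ξ = 1 := hone x hx
  have hξ0 : ξ ≠ 0 := by
    intro h
    rw [h, (hM1 0).mpr rfl] at hMξ
    norm_num at hMξ
  have hFd : HasFDerivAt M₀ (InnerProductSpace.toDual ℝ (EuclideanSpace ℝ (Fin n)) ξ) x :=
    (hM₀diff x hx).hasGradientAt.hasFDerivAt
  have euler : ⟪ξ, x⟫ = M₀ x := by
    have hc : HasDerivAt (fun t : ℝ => t • x) x 1 := by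
      simpa using (hasDerivAt_id (1:ℝ)).smul_const x
    have hφ : HasDerivAt (fun t : ℝ => M₀ (t • x)) (InnerProductSpace.toDual ℝ (EuclideanSpace ℝ (Fin n)) ξ x) 1 := by
      have hFd' : HasFDerivAt M₀ (InnerProductSpace.toDual ℝ (EuclideanSpace ℝ (Fin n)) ξ) ((1:ℝ) • x) := by
        rwa [one_smul]
      exact hFd'.comp_hasDerivAt (1:ℝ) hc
    have hψ : HasDerivAt (fun t : ℝ => M₀ (t • x)) (M₀ x) 1 := by
      have hlin : HasDerivAt (fun t : ℝ => t * M₀ x) (M₀ x) 1 := by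
        simpa using (hasDerivAt_id (1:ℝ)).mul_const (M₀ x)
      apply hlin.congr_of_eventuallyEq
      have hmem : Set.Ioi (0:ℝ) ∈ nhds (1:ℝ) := Ioi_mem_nhds one_pos
      filter_upwards [hmem] with t ht
      exact hom t ht
    have := hφ.unique hψ
    simpa [InnerProductSpace.toDual_apply_apply] using this
  -- differentiability of M at ξ
  have hMdiff : DifferentiableAt ℝ M ξ := by
    have hopen : IsOpen ({(0 : EuclideanSpace ℝ (Fin n))}ᶜ) := isOpen_compl_singleton
    have hFdiff : DifferentiableAt ℝ (fun y => (M y) ^ 2) ξ :=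
      ((hMC2.contDiffAt (hopen.mem_nhds hξ0)).differentiableAt (by norm_num))
    have hsqrt : DifferentiableAt ℝ Real.sqrt ((M ξ) ^ 2) := by
      apply (Real.hasDerivAt_sqrt _).differentiableAt
      rw [hMξ]; norm_num
    have heq : M = fun y => Real.sqrt ((M y) ^ 2) :=
      funext fun y => (Real.sqrt_sq (hM0 y)).symm
    rw [heq]
    exact hsqrt.comp ξ hFdiff
  set g : EuclideanSpace ℝ (Fin n) := gradient M ξ with hgdef
  have hMg : HasFDerivAt M (InnerProductSpace.toDual ℝ (EuclideanSpace ℝ (Fin n)) g) ξ :=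
    hMdiff.hasGradientAt.hasFDerivAt
  -- ξ is a global max of h
  set h : EuclideanSpace ℝ (Fin n) → ℝ := fun η => ⟪x, η⟫ - M₀ x * M η with hhdef
  have hhξ : h ξ = 0 := by
    simp only [hhdef, hMξ, mul_one]
    rw [real_inner_comm, euler, sub_self]
  have hmax : IsLocalMax h ξ := by
    apply Filter.Eventually.of_forall
    intro η
    rw [hhξ]
    simp only [hhdef, sub_nonpos]
    exact key_le x η
  -- derivative of h at ξ
  have hinner : HasFDerivAt (fun η : EuclideanSpace ℝ (Fin n) => ⟪x, η⟫) (InnerProductSpace.toDual ℝ (EuclideanSpace ℝ (Fin n)) x) ξ := by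
    have := (InnerProductSpace.toDual ℝ (EuclideanSpace ℝ (Fin n)) x).hasFDerivAt (x := ξ)
    apply this.congr_of_eventuallyEq
    exact Filter.Eventually.of_forall fun y => by simp [InnerProductSpace.toDual_apply_apply]
  have hh : HasFDerivAt h
      (InnerProductSpace.toDual ℝ (EuclideanSpace ℝ (Fin n)) x - M₀ x • InnerProductSpace.toDual ℝ (EuclideanSpace ℝ (Fin n)) g) ξ :=
    hinner.sub (hMg.const_mul (M₀ x))
  have hzero : InnerProductSpace.toDual ℝ (EuclideanSpace ℝ (Fin n)) x - M₀ x • InnerProductSpace.toDual ℝ (EuclideanSpace ℝ (Fin n)) g = 0 := by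
    rw [← hh.fderiv]
    exact hmax.fderiv_eq_zero
  have hkey : ∀ y : EuclideanSpace ℝ (Fin n), ⟪x - M₀ x • g, y⟫ = 0 := by
    intro y
    have := congrFun (congrArg DFunLike.coe hzero) y
    simp only [ContinuousLinearMap.sub_apply, ContinuousLinearMap.smul_apply,
      ContinuousLinearMap.zero_apply, InnerProductSpace.toDual_apply_apply, smul_eq_mul] at this
    rw [inner_sub_left, real_inner_smul_left]
    simpa [InnerProductSpace.toDual_apply_apply] using this
  have : x - M₀ x • g = 0 := by
    have := hkey (x - M₀ x • g)
    exact inner_self_eq_zero.mp this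
  have heq2 : x = M₀ x • g := by linear_combination (norm := module) this
  exact heq2.symm
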